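/- Let Q be an n×n Q-matrix and let f solve the adjoint ODE f' = Q f. Then the maximum max_i f_i(t) is nonincreasing in time and the minimum min_i f_i(t) is nondecreasing in time. -/

import Mathlib

open Filter Set Topology

private lemma qmp_sup_aux {n : ℕ} (hn : 0 < n) (Q : Matrix (Fin n) (Fin n) ℝ)
    (hQoff : ∀ i j, i ≠ j → 0 ≤ Q i j)
    (hQrow : ∀ i, ∑ j, Q i j = 0)
    (f : ℝ → Fin n → ℝ)
    (hODE : ∀ t ≥ (0:ℝ), ∀ i, HasDerivAt (fun s => f s i) (∑ j, Q i j * f t j) t) :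
    ∀ s t : ℝ, 0 ≤ s → s ≤ t →
      Finset.univ.sup' ⟨⟨0, hn⟩, Finset.mem_univ _⟩ (fun i => f t i)
        ≤ Finset.univ.sup' ⟨⟨0, hn⟩, Finset.mem_univ _⟩ (fun i => f s i) := by
  intro s t hs hst
  set H : (Finset.univ : Finset (Fin n)).Nonempty := ⟨⟨0, hn⟩, Finset.mem_univ _⟩
  set M : ℝ → ℝ := fun x => Finset.univ.sup' H (fun i => f x i) with hM
  -- continuity of each coordinate at points ≥ 0
  have hcont : ∀ x : ℝ, 0 ≤ x → ∀ i, ContinuousAt (fun z => f z i) x := fun x hx i =>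
    (hODE x hx i).continuousAt
  have hMcont : ContinuousOn M (Icc s t) := by
    intro x hx
    have hx0 : (0:ℝ) ≤ x := le_trans hs hx.1
    exact (ContinuousAt.finset_sup'_apply H fun i _ => hcont x hx0 i).continuousWithinAt
  have key : ∀ ⦃x⦄, x ∈ Icc s t → M x ≤ M s := by
    apply image_le_of_liminf_slope_right_le_deriv_boundary (B := fun _ => M s)
      (B' := fun _ => 0) hMcont le_rfl
      continuousOn_const (fun x _ => hasDerivWithinAt_const x _ (M s))
    intro x hx r hr
    by_contra hcon
    rw [not_frequently] at hcon
    have hx0 : (0:ℝ) ≤ x := le_trans hs hx.1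
    -- eventually, M x + r * (z - x) ≤ M z
    have hev : ∀ᶠ z in 𝓝[>] x, ∃ j, M x + r * (z - x) ≤ f z j := by
      filter_upwards [hcon, self_mem_nhdsWithin] with z hz (hz' : z ∈ Ioi x)
      push_neg at hz
      have hzx : 0 < z - x := sub_pos.2 hz'
      have : M x + r * (z - x) ≤ M z := by
        rw [slope_def_field, le_div_iff₀ hzx] at hz
        linarith
      obtain ⟨j, _, hj⟩ := Finset.exists_mem_eq_sup' H (fun i => f z i)
      exact ⟨j, hj ▸ this⟩
    -- extract a single index j that works frequently
    have hfreq : ∃ j, ∃ᶠ z in 𝓝[>] x, M x + r * (z - x) ≤ f z j := by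
      by_contra hc
      push_neg at hc
      have : ∀ᶠ z in 𝓝[>] x, ∀ j, f z j < M x + r * (z - x) := eventually_all.2 hc
      have := (hev.and this).exists
      obtain ⟨z, ⟨j, hj⟩, hall⟩ := this
      exact absurd hj (not_le.2 (hall j))
    obtain ⟨j, hj⟩ := hfreq
    -- limits along 𝓝[>] x
    have hle : 𝓝[>] x ≤ 𝓝[≠] x := nhdsWithin_mono x fun z hz => ne_of_gt hz
    have htend : Tendsto (fun z => f z j - r * (z - x)) (𝓝[>] x) (𝓝 (f x j)) := by
      have h1 : Tendsto (fun z => f z j) (𝓝[>] x) (𝓝 (f x j)) :=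
        ((hcont x hx0 j).tendsto).mono_left nhdsWithin_le_nhds
      have h2 : Tendsto (fun z => r * (z - x)) (𝓝[>] x) (𝓝 0) := by
        have : Tendsto (fun z : ℝ => r * (z - x)) (𝓝 x) (𝓝 (r * (x - x))) :=
          (tendsto_id.sub tendsto_const_nhds).const_mul r
        simpa using this.mono_left nhdsWithin_le_nhds
      simpa using h1.sub h2
    -- j attains the max at x
    have hjmax : f x j = M x := by
      have h1 : M x ≤ f x j := by
        apply ge_of_tendsto_of_frequently htend
        exact hj.mono fun z hz => by linarith
      exact le_antisymm (Finset.le_sup' (fun i => f x i) (Finset.mem_univ j)) h1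
    -- derivative of f · j at x
    set d : ℝ := ∑ l, Q j l * f x l with hd
    have hderiv : Tendsto (slope (fun z => f z j) x) (𝓝[>] x) (𝓝 d) :=
      ((hasDerivAt_iff_tendsto_slope.1 (hODE x hx0 j))).mono_left hle
    have hrd : r ≤ d := by
      apply ge_of_tendsto_of_frequently hderiv
      apply (hj.and_eventually self_mem_nhdsWithin).mono
      rintro z ⟨hz, (hz' : z ∈ Ioi x)⟩
      have hzx : 0 < z - x := sub_pos.2 hz'
      rw [slope_def_field, le_div_iff₀ hzx]
      have : f x j + r * (z - x) ≤ f z j := by rw [hjmax]; linarith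
      linarith
    -- but d ≤ 0
    have hd0 : d ≤ 0 := by
      have hdeq : d = ∑ l, Q j l * (f x l - f x j) := by
        simp only [mul_sub]
        rw [Finset.sum_sub_distrib, ← Finset.sum_mul, hQrow j, zero_mul, sub_zero]
      rw [hdeq]
      apply Finset.sum_nonpos
      intro l _
      rcases eq_or_ne l j with rfl | hlj
      · simp
      · apply mul_nonpos_of_nonneg_of_nonpos (hQoff j l hlj.symm)
        have : f x l ≤ M x := Finset.le_sup' (fun i => f x i) (Finset.mem_univ l)
        linarith [hjmax ▸ this]
    linarith
  exact key ⟨hst, le_rfl⟩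

/-- Discrete maximum principle for the adjoint equation `f' = Q f` of a Q-matrix:
the maximum of `f` is nonincreasing and the minimum is nondecreasing in time. -/
theorem qmatrix_maximum_principle {n : ℕ} (hn : 0 < n) (Q : Matrix (Fin n) (Fin n) ℝ)
    (hQoff : ∀ i j, i ≠ j → 0 ≤ Q i j)
    (hQrow : ∀ i, ∑ j, Q i j = 0)
    (f : ℝ → Fin n → ℝ)
    (hODE : ∀ t ≥ (0:ℝ), ∀ i, HasDerivAt (fun s => f s i) (∑ j, Q i j * f t j) t) :
    ∀ s t : ℝ, 0 ≤ s → s ≤ t →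
      (Finset.univ.sup' ⟨⟨0, hn⟩, Finset.mem_univ _⟩ (fun i => f t i)
          ≤ Finset.univ.sup' ⟨⟨0, hn⟩, Finset.mem_univ _⟩ (fun i => f s i)) ∧
      (Finset.univ.inf' ⟨⟨0, hn⟩, Finset.mem_univ _⟩ (fun i => f s i)
          ≤ Finset.univ.inf' ⟨⟨0, hn⟩, Finset.mem_univ _⟩ (fun i => f t i)) := by
  intro s t hs hst
  constructor
  · exact qmp_sup_aux hn Q hQoff hQrow f hODE s t hs hst
  · -- apply the sup result to -f
    have hODE' : ∀ u ≥ (0:ℝ), ∀ i,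
        HasDerivAt (fun z => -f z i) (∑ j, Q i j * (-f u j)) u := by
      intro u hu i
      have := (hODE u hu i).neg
      simpa [Pi.neg_def, Finset.sum_neg_distrib, mul_neg, ← Finset.sum_neg_distrib] using this
    have h := qmp_sup_aux hn Q hQoff hQrow (fun z i => -f z i) hODE' s t hs hst
    have hneg : ∀ x : ℝ, Finset.univ.sup' ⟨⟨0, hn⟩, Finset.mem_univ _⟩ (fun i => -f x i)
        = - Finset.univ.inf' ⟨⟨0, hn⟩, Finset.mem_univ _⟩ (fun i => f x i) := by
      intro x
      apply le_antisymm
      · apply Finset.sup'_le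
        intro i _
        exact neg_le_neg (Finset.inf'_le _ (Finset.mem_univ i))
      · obtain ⟨i, _, hi⟩ := Finset.exists_mem_eq_inf'
          (⟨⟨0, hn⟩, Finset.mem_univ _⟩ : (Finset.univ : Finset (Fin n)).Nonempty)
          (fun i => f x i)
        rw [hi]
        exact Finset.le_sup' (fun i => -f x i) (Finset.mem_univ i)
    rw [hneg, hneg] at h
    linarith
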